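/- Let (X, 𝓑, μ, f) be a dissipative system of bounded distortion generated by W, with f bijective and both f and f⁻¹ satisfying condition (⋆), let 1 ≤ p < ∞, and let H be the constant from the generalized bounded distortion inequality (◇◇). Define weights w_k = (μ(f^{k−1}(W))/μ(f^k(W)))^{1/p} for k ∈ ℤ. Then (w_k) is bounded with inf_{k∈ℤ} w_k > 0, so the bilateral weighted backward shift B_w on ℓ^p(ℤ) is a well-defined invertible operator, and there exists a continuous linear surjection Π : L^p(X, μ) → ℓ^p(ℤ), given by (Π φ)_k = (μ(f^k(W))^{1/p}/μ(W)) ∫_W φ ∘ f^k dμ, satisfying ‖Π‖ ≤ H^{1/p}, Π ∘ T_f = B_w ∘ Π, and for every x ∈ ℓ^p(ℤ) there exists φ ∈ L^p(X, μ) with Π(φ) = x and ‖φ‖_p ≤ ‖x‖_p (i.e., Π admits a bounded selector with L = 1). -/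

import Mathlib

open MeasureTheory Filter Set Function Topology ENNReal

noncomputable section

namespace GHShadow

/-- The shadowing property for an invertible bounded linear operator. -/
def HasShadowing {E : Type*} [NormedAddCommGroup E] [NormedSpace ℝ E]
    (T : E ≃L[ℝ] E) : Prop :=
  ∀ ε : ℝ, 0 < ε → ∃ δ : ℝ, 0 < δ ∧ ∀ x : ℤ → E,
    (∀ n : ℤ, ‖T (x n) - x (n + 1)‖ ≤ δ) →
      ∃ y : E, ∀ n : ℤ, ‖(T ^ n) y - x n‖ < ε

/-- `lim ‖Tⁿ‖^{1/n}` exists and is `< 1`. -/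
def SpectralRadiusLtOne {E : Type*} [NormedAddCommGroup E] [NormedSpace ℝ E]
    (T : E →L[ℝ] E) : Prop :=
  ∃ r : ℝ, r < 1 ∧ Tendsto (fun n : ℕ => ‖T ^ n‖ ^ (1 / (n : ℝ))) atTop (nhds r)

/-- The restriction of `T` to `M` has spectral radius `< 1`
(equivalently, is a proper contraction in an equivalent norm). -/
def ContractsOn {E : Type*} [NormedAddCommGroup E] [NormedSpace ℝ E]
    (T : E ≃L[ℝ] E) (M : Submodule ℝ E) : Prop :=
  ∃ C : ℝ, 0 < C ∧ ∃ t : ℝ, 0 < t ∧ t < 1 ∧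
    ∀ n : ℕ, ∀ x ∈ M, ‖(T ^ n) x‖ ≤ C * t ^ n * ‖x‖

def GeneralizedHyperbolic {E : Type*} [NormedAddCommGroup E] [NormedSpace ℝ E]
    (T : E ≃L[ℝ] E) : Prop :=
  ∃ M N : Submodule ℝ E, IsClosed (M : Set E) ∧ IsClosed (N : Set E) ∧
    IsCompl M N ∧ (∀ x ∈ M, T x ∈ M) ∧ (∀ x ∈ N, T.symm x ∈ N) ∧
    ContractsOn T M ∧ ContractsOn T.symm N

variable {X : Type*} [MeasurableSpace X]

/-- image of `B` under the `k`-th iterate of the invertible map `f`. -/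
def img (f : Equiv.Perm X) (k : ℤ) (B : Set X) : Set X := ⇑(f ^ k) '' B

/-- `(X, 𝓑, μ, f)` is a dissipative system generated by `W`. -/
structure IsDissipative (μ : Measure X) (f : Equiv.Perm X) (W : Set X) : Prop where
  sigmaFin : SigmaFinite μ
  meas_f : Measurable f
  meas_symm : Measurable f.symm
  meas_W : MeasurableSet W
  pos : 0 < μ W
  fin : μ W < ⊤
  disj : Pairwise fun k l : ℤ => Disjoint (img f k W) (img f l W)
  cover : (⋃ k : ℤ, img f k W) = univ

/-- `f` is of bounded distortion on `W` with constant `K`. -/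
def BoundedDistortion (μ : Measure X) (f : Equiv.Perm X) (W : Set X) (K : ℝ≥0∞) : Prop :=
  ∀ k : ℤ, ∀ B : Set X, MeasurableSet B → B ⊆ W →
    (1 / K) * (μ (img f k W) * μ B) ≤ μ (img f k B) * μ W ∧
      μ (img f k B) * μ W ≤ K * (μ (img f k W) * μ B)

/-- condition (⋆) for a transformation `g`. -/
def CondStar (μ : Measure X) (g : X → X) : Prop :=
  ∃ c : ℝ≥0∞, 0 < c ∧ c ≠ ⊤ ∧ ∀ B : Set X, MeasurableSet B → μ (g ⁻¹' B) ≤ c * μ B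

/-- condition 𝓗𝓒. -/
def CondHC (μ : Measure X) (f : Equiv.Perm X) (W : Set X) : Prop :=
  limsup (fun n : ℕ =>
    ⨆ k : ℤ, (μ (img f k W) / μ (img f (k + (n : ℤ)) W)) ^ (1 / (n : ℝ))) atTop < 1

/-- condition 𝓗𝓓. -/
def CondHD (μ : Measure X) (f : Equiv.Perm X) (W : Set X) : Prop :=
  1 < liminf (fun n : ℕ =>
    ⨅ k : ℤ, (μ (img f k W) / μ (img f (k + (n : ℤ)) W)) ^ (1 / (n : ℝ))) atTop

/-- condition 𝓖𝓗. -/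
def CondGH (μ : Measure X) (f : Equiv.Perm X) (W : Set X) : Prop :=
  limsup (fun n : ℕ =>
      ⨆ m : ℕ, (μ (img f (-(m : ℤ) - (n : ℤ)) W) / μ (img f (-(m : ℤ)) W)) ^ (1 / (n : ℝ)))
      atTop < 1 ∧
  1 < liminf (fun n : ℕ =>
      ⨅ m : ℕ, (μ (img f (m : ℤ) W) / μ (img f ((m : ℤ) + (n : ℤ)) W)) ^ (1 / (n : ℝ))) atTop

/-- `T` represents the composition operator `φ ↦ φ ∘ f` on `L^p(X,μ)`. -/
def RepsComp (μ : Measure X) (p : ℝ≥0∞) [Fact (1 ≤ p)] (f : X → X)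
    (T : Lp ℝ p μ ≃L[ℝ] Lp ℝ p μ) : Prop :=
  ∀ φ : Lp ℝ p μ, ⇑(T φ) =ᵐ[μ] fun x => (φ : X → ℝ) (f x)


/-- The weight sequence `w_k = (μ(f^{k-1}(W))/μ(f^k(W)))^{1/p}`. -/
def wseq {X : Type*} [MeasurableSpace X] (μ : Measure X) (f : Equiv.Perm X)
    (W : Set X) (p : ℝ≥0∞) (k : ℤ) : ℝ :=
  ((μ (img f (k - 1) W) / μ (img f k W)) ^ (1 / p.toReal)).toReal

section Aux

variable {X : Type*} [MeasurableSpace X] {μ : Measure X} {f : Equiv.Perm X}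

lemma meas_zpow (hf : Measurable f) (hf' : Measurable f.symm) (k : ℤ) :
    Measurable ⇑(f ^ k) := by
  induction k using Int.induction_on with
  | zero => simpa using measurable_id
  | succ n ih =>
      rw [zpow_add_one, Equiv.Perm.coe_mul]
      exact ih.comp hf
  | pred n ih =>
      rw [zpow_sub_one, Equiv.Perm.coe_mul, Equiv.Perm.inv_def]
      exact ih.comp hf'

lemma star_zpow (hf : Measurable f) (hf' : Measurable f.symm)
    (hs : CondStar μ f) (hs' : CondStar μ f.symm) (k : ℤ) :
    ∃ c : ℝ≥0∞, 0 < c ∧ c ≠ ⊤ ∧ ∀ B : Set X, MeasurableSet B →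
      μ (⇑(f ^ k) ⁻¹' B) ≤ c * μ B := by
  obtain ⟨c, hc0, hct, hc⟩ := hs
  obtain ⟨c', hc'0, hc't, hc'⟩ := hs'
  induction k using Int.induction_on with
  | zero => exact ⟨1, one_pos, one_ne_top, fun B _ => by simp⟩
  | succ n ih =>
      obtain ⟨d, hd0, hdt, hd⟩ := ih
      refine ⟨c * d, ENNReal.mul_pos hc0.ne' hd0.ne', ENNReal.mul_ne_top hct hdt,
        fun B hB => ?_⟩
      rw [zpow_add_one, Equiv.Perm.coe_mul, Set.preimage_comp]
      calc μ (⇑f ⁻¹' (⇑(f ^ (n : ℤ)) ⁻¹' B)) ≤ c * μ (⇑(f ^ (n : ℤ)) ⁻¹' B) :=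
            hc _ ((meas_zpow hf hf' _) hB)
        _ ≤ c * (d * μ B) := by gcongr; exact hd _ hB
        _ = c * d * μ B := by ring
  | pred n ih =>
      obtain ⟨d, hd0, hdt, hd⟩ := ih
      refine ⟨c' * d, ENNReal.mul_pos hc'0.ne' hd0.ne', ENNReal.mul_ne_top hc't hdt,
        fun B hB => ?_⟩
      rw [zpow_sub_one, Equiv.Perm.coe_mul, Equiv.Perm.inv_def, Set.preimage_comp]
      calc μ (⇑f.symm ⁻¹' (⇑(f ^ (-n : ℤ)) ⁻¹' B)) ≤ c' * μ (⇑(f ^ (-n : ℤ)) ⁻¹' B) :=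
            hc' _ ((meas_zpow hf hf' _) hB)
        _ ≤ c' * (d * μ B) := by gcongr; exact hd _ hB
        _ = c' * d * μ B := by ring

lemma preimage_null (hf : Measurable f) (hf' : Measurable f.symm)
    (hs : CondStar μ f) (hs' : CondStar μ f.symm) (k : ℤ) {s : Set X}
    (h0 : μ s = 0) : μ (⇑(f ^ k) ⁻¹' s) = 0 := by
  obtain ⟨c, _, _, hc⟩ := star_zpow hf hf' hs hs' k
  obtain ⟨t, hst, htm, ht0⟩ := exists_measurable_superset_of_null h0
  refine le_antisymm ?_ zero_le
  calc μ (⇑(f ^ k) ⁻¹' s) ≤ μ (⇑(f ^ k) ⁻¹' t) := measure_mono (preimage_mono hst)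
    _ ≤ c * μ t := hc _ htm
    _ = 0 := by rw [ht0, mul_zero]

lemma ae_comp (hf : Measurable f) (hf' : Measurable f.symm)
    (hs : CondStar μ f) (hs' : CondStar μ f.symm) (k : ℤ) {g₁ g₂ : X → ℝ}
    (h : g₁ =ᵐ[μ] g₂) :
    (fun x => g₁ ((f ^ k) x)) =ᵐ[μ] fun x => g₂ ((f ^ k) x) := by
  have h0 : μ {y | g₁ y ≠ g₂ y} = 0 := h
  have : {x | g₁ ((f ^ k) x) ≠ g₂ ((f ^ k) x)} = ⇑(f ^ k) ⁻¹' {y | g₁ y ≠ g₂ y} := rfl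
  show μ {x | g₁ ((f ^ k) x) ≠ g₂ ((f ^ k) x)} = 0
  rw [this]
  exact preimage_null hf hf' hs hs' k h0

lemma img_eq_preimage (k : ℤ) (B : Set X) : img f k B = ⇑(f ^ (-k)) ⁻¹' B := by
  rw [img, Equiv.image_eq_preimage_symm, zpow_neg, Equiv.Perm.inv_def]

lemma measurableSet_img (hf : Measurable f) (hf' : Measurable f.symm) (k : ℤ)
    {B : Set X} (hB : MeasurableSet B) : MeasurableSet (img f k B) := by
  rw [img_eq_preimage]; exact (meas_zpow hf hf' (-k)) hB

lemma img_zero (B : Set X) : img f 0 B = B := by simp [img]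


lemma img_bounds (hf : Measurable f) (hf' : Measurable f.symm)
    (hs : CondStar μ f) (hs' : CondStar μ f.symm) (k : ℤ) :
    ∃ c : ℝ≥0∞, 0 < c ∧ c ≠ ⊤ ∧ ∀ B : Set X, MeasurableSet B →
      μ (img f k B) ≤ c * μ B ∧ μ B ≤ c * μ (img f k B) := by
  obtain ⟨c₁, h₁0, h₁t, h₁⟩ := star_zpow hf hf' hs hs' (-k)
  obtain ⟨c₂, h₂0, h₂t, h₂⟩ := star_zpow hf hf' hs hs' k
  refine ⟨c₁ + c₂, lt_of_lt_of_le h₁0 le_self_add, ENNReal.add_ne_top.2 ⟨h₁t, h₂t⟩, fun B hB => ⟨?_, ?_⟩⟩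
  · calc μ (img f k B) = μ (⇑(f ^ (-k)) ⁻¹' B) := by rw [img_eq_preimage]
      _ ≤ c₁ * μ B := h₁ _ hB
      _ ≤ (c₁ + c₂) * μ B := by gcongr; exact le_self_add
  · have hBeq : B = ⇑(f ^ k) ⁻¹' (img f k B) := by
      rw [img]; exact (Equiv.preimage_image _ _).symm
    calc μ B = μ (⇑(f ^ k) ⁻¹' (img f k B)) := by rw [← hBeq]
      _ ≤ c₂ * μ (img f k B) := h₂ _ (measurableSet_img hf hf' k hB)
      _ ≤ (c₁ + c₂) * μ (img f k B) := by gcongr; exact le_add_self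

lemma img_pos_fin {W : Set X} (hf : Measurable f) (hf' : Measurable f.symm)
    (hs : CondStar μ f) (hs' : CondStar μ f.symm) (hW : MeasurableSet W)
    (hWpos : 0 < μ W) (hWfin : μ W < ⊤) (k : ℤ) :
    0 < μ (img f k W) ∧ μ (img f k W) ≠ ⊤ := by
  obtain ⟨c, hc0, hct, hc⟩ := img_bounds hf hf' hs hs' k
  obtain ⟨h1, h2⟩ := hc W hW
  constructor
  · by_contra h
    push_neg at h
    have h0 : μ (img f k W) = 0 := le_antisymm h zero_le
    rw [h0, mul_zero, le_zero_iff] at h2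
    exact hWpos.ne' h2
  · intro htop
    rw [htop] at h1
    exact absurd h1 (by simp [ENNReal.mul_ne_top hct hWfin.ne, top_le_iff])


lemma lint_comp_le {W : Set X} {H : ℝ≥0∞}
    (hf : Measurable f) (hf' : Measurable f.symm)
    (hs : CondStar μ f) (hs' : CondStar μ f.symm)
    (hW : MeasurableSet W) (hWpos : 0 < μ W) (hWfin : μ W < ⊤)
    (hgbd2 : ∀ B : Set X, MeasurableSet B → B ⊆ W → 0 < μ B → ∀ r s : ℤ,
        μ (img f (r + s) B) / μ (img f s B) ≤
          H * (μ (img f (r + s) W) / μ (img f s W)))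
    (k : ℤ) (g : X → ℝ≥0∞) (hg : Measurable g) :
    ∫⁻ x in W, g ((f ^ k) x) ∂μ ≤
      H * (μ W / μ (img f k W)) * ∫⁻ y in img f k W, g y ∂μ := by
  obtain ⟨c, hc0, hct, hc⟩ := img_bounds hf hf' hs hs' k
  have hmk := meas_zpow hf hf' k
  have hmap : Measure.map ⇑(f ^ k) (μ.restrict W) ≤
      (H * (μ W / μ (img f k W))) • μ.restrict (img f k W) := by
    refine Measure.le_iff.2 fun B hB => ?_
    rw [Measure.map_apply hmk hB, Measure.restrict_apply (hmk hB),
      Measure.smul_apply, Measure.restrict_apply hB, smul_eq_mul]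
    set s := ⇑(f ^ k) ⁻¹' B ∩ W with hs_def
    by_cases h0 : μ s = 0
    · rw [h0]; exact zero_le
    have hsm : MeasurableSet s := (hmk hB).inter hW
    have hpos : 0 < μ s := zero_lt_iff.2 h0
    have h2 := hgbd2 s hsm inter_subset_right hpos (-k) k
    rw [neg_add_cancel, img_zero, img_zero] at h2
    have himg_ne0 : μ (img f k s) ≠ 0 := by
      intro hz
      have := (hc s hsm).2
      rw [hz, mul_zero, le_zero_iff] at this
      exact h0 this
    have hsubW : img f k s ⊆ img f k W := image_mono inter_subset_right
    have himg_fin : μ (img f k s) ≠ ⊤ :=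
      ne_top_of_le_ne_top (img_pos_fin hf hf' hs hs' hW hWpos hWfin k).2
        (measure_mono hsubW)
    have key := (ENNReal.div_le_iff_le_mul (Or.inl himg_ne0) (Or.inl himg_fin)).1 h2
    refine key.trans ?_
    gcongr
    calc img f k s ⊆ (⇑(f ^ k) '' (⇑(f ^ k) ⁻¹' B)) ∩ (⇑(f ^ k) '' W) :=
          image_inter_subset _ _ _
      _ ⊆ B ∩ img f k W := inter_subset_inter (image_preimage_subset _ _) subset_rfl
  calc ∫⁻ x in W, g ((f ^ k) x) ∂μ
      = ∫⁻ y, g y ∂(Measure.map ⇑(f ^ k) (μ.restrict W)) := (lintegral_map hg hmk).symm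
    _ ≤ ∫⁻ y, g y ∂((H * (μ W / μ (img f k W))) • μ.restrict (img f k W)) :=
        lintegral_mono' hmap le_rfl
    _ = H * (μ W / μ (img f k W)) * ∫⁻ y in img f k W, g y ∂μ :=
        lintegral_smul_measure _ _

lemma lint_holder {W : Set X} {pt : ℝ} (hpt : 1 ≤ pt) (h : X → ℝ≥0∞)
    (hm : AEMeasurable h (μ.restrict W)) :
    ∫⁻ x in W, h x ∂μ ≤ (∫⁻ x in W, h x ^ pt ∂μ) ^ (1 / pt) * μ W ^ (1 - 1 / pt) := by
  rcases eq_or_lt_of_le hpt with heq | hlt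
  · simp [← heq]
  · have hpq := Real.HolderConjugate.conjExponent hlt
    have hmain := ENNReal.lintegral_mul_le_Lp_mul_Lq (μ.restrict W) hpq hm
      (aemeasurable_const (b := (1 : ℝ≥0∞)))
    have hpt0 : pt ≠ 0 := by positivity
    have hq : 1 / Real.conjExponent pt = 1 - 1 / pt := by
      rw [Real.conjExponent]
      field_simp
    simpa [ENNReal.one_rpow, hq, Measure.restrict_apply_univ] using hmain


lemma shift_term_le {p : ℝ≥0∞} (hpt : 0 < p.toReal) (u : ℤ → ℝ) {b : ℝ}
    (hb : ∀ n, |u n| ≤ b) (σ : ℤ ≃ ℤ) (x : lp (fun _ : ℤ => ℝ) p) (n : ℤ) :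
    ‖u n * x (σ n)‖ ^ p.toReal ≤ b ^ p.toReal * ‖x (σ n)‖ ^ p.toReal := by
  have hb0 : 0 ≤ b := (abs_nonneg _).trans (hb n)
  rw [norm_mul, ← Real.mul_rpow hb0 (norm_nonneg _)]
  apply Real.rpow_le_rpow (by positivity) ?_ hpt.le
  rw [Real.norm_eq_abs]
  exact mul_le_mul_of_nonneg_right (hb n) (abs_nonneg _)

lemma shift_memℓp {p : ℝ≥0∞} (hpt : 0 < p.toReal) (u : ℤ → ℝ) {b : ℝ}
    (hb : ∀ n, |u n| ≤ b) (σ : ℤ ≃ ℤ) (x : lp (fun _ : ℤ => ℝ) p) :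
    Memℓp (fun n => u n * x (σ n)) p := by
  apply memℓp_gen
  have hsum : Summable fun n => ‖x (σ n)‖ ^ p.toReal :=
    (σ.summable_iff (f := fun m : ℤ => ‖x m‖ ^ p.toReal)).2 ((lp.memℓp x).summable hpt)
  exact Summable.of_nonneg_of_le (fun n => by positivity)
    (fun n => shift_term_le hpt u hb σ x n) (hsum.mul_left (b ^ p.toReal))

lemma shift_tsum_le {p : ℝ≥0∞} [Fact (1 ≤ p)] (hpt : 0 < p.toReal) (u : ℤ → ℝ) {b : ℝ}
    (hb : ∀ n, |u n| ≤ b) (σ : ℤ ≃ ℤ) (x : lp (fun _ : ℤ => ℝ) p) :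
    ∑' n, ‖u n * x (σ n)‖ ^ p.toReal ≤ (b * ‖x‖) ^ p.toReal := by
  have hb0 : 0 ≤ b := (abs_nonneg _).trans (hb 0)
  have hsumx : Summable fun n => ‖x (σ n)‖ ^ p.toReal :=
    (σ.summable_iff (f := fun m : ℤ => ‖x m‖ ^ p.toReal)).2 ((lp.memℓp x).summable hpt)
  have h1 : ∑' n, ‖u n * x (σ n)‖ ^ p.toReal ≤
      ∑' n, b ^ p.toReal * ‖x (σ n)‖ ^ p.toReal :=
    Summable.tsum_le_tsum (fun n => shift_term_le hpt u hb σ x n)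
      ((shift_memℓp hpt u hb σ x).summable hpt) (hsumx.mul_left _)
  rw [tsum_mul_left, σ.tsum_eq (f := fun m : ℤ => ‖x m‖ ^ p.toReal)] at h1
  rw [Real.mul_rpow hb0 (norm_nonneg _)]
  rwa [← lp.norm_rpow_eq_tsum hpt x] at h1


lemma ae_nnnorm_rpow {α : Type*} [MeasurableSpace α] {ν : Measure α} {g₁ g₂ : α → ℝ}
    (h : g₁ =ᵐ[ν] g₂) (q : ℝ) :
    (fun x => (‖g₁ x‖₊ : ℝ≥0∞) ^ q) =ᵐ[ν] fun x => (‖g₂ x‖₊ : ℝ≥0∞) ^ q := by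
  filter_upwards [h] with x hx
  rw [hx]

lemma ae_nnnorm' {α : Type*} [MeasurableSpace α] {ν : Measure α} {g₁ g₂ : α → ℝ}
    (h : g₁ =ᵐ[ν] g₂) :
    (fun x => (‖g₁ x‖₊ : ℝ≥0∞)) =ᵐ[ν] fun x => (‖g₂ x‖₊ : ℝ≥0∞) := by
  filter_upwards [h] with x hx
  rw [hx]

end Aux

set_option maxHeartbeats 2000000 in
/-- Lemma `factorBw`: the weighted backward shift `B_w` on `ℓ^p(ℤ)`
with weights `w_k = (μ(f^{k-1}(W))/μ(f^k(W)))^{1/p}` is a well-defined invertible operator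
and is a factor of `T_f` via a factor map `Π` of norm at most `H^{1/p}` that admits a
bounded selector with constant `L = 1`. -/
theorem factor_onto_weighted_shift
    {X : Type*} [MeasurableSpace X] (μ : Measure X) (f : Equiv.Perm X) (W : Set X)
    (p : ℝ≥0∞) [Fact (1 ≤ p)] (hp : p ≠ ⊤)
    (hdiss : IsDissipative μ f W)
    (K : ℝ≥0∞) (hK0 : 0 < K) (hKfin : K ≠ ⊤)
    (hbd : BoundedDistortion μ f W K)
    (hstar : CondStar μ f) (hstar' : CondStar μ f.symm)
    (H : ℝ≥0∞) (hH0 : 0 < H) (hHfin : H ≠ ⊤)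
    (hgbd : ∀ B : Set X, MeasurableSet B → B ⊆ W → 0 < μ B → ∀ r s : ℤ,
      (1 / H) * (μ (img f (r + s) W) / μ (img f s W)) ≤
          μ (img f (r + s) B) / μ (img f s B) ∧
        μ (img f (r + s) B) / μ (img f s B) ≤
          H * (μ (img f (r + s) W) / μ (img f s W)))
    (T : Lp ℝ p μ ≃L[ℝ] Lp ℝ p μ) (hT : RepsComp μ p f T) :
    (∃ a b : ℝ, 0 < a ∧ ∀ k : ℤ, a ≤ wseq μ f W p k ∧ wseq μ f W p k ≤ b) ∧
    ∃ (Bw : lp (fun _ : ℤ => ℝ) p ≃L[ℝ] lp (fun _ : ℤ => ℝ) p)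
      (Pi : Lp ℝ p μ →L[ℝ] lp (fun _ : ℤ => ℝ) p),
      (∀ (x : lp (fun _ : ℤ => ℝ) p) (n : ℤ), Bw x n = wseq μ f W p (n + 1) * x (n + 1)) ∧
      Function.Surjective Pi ∧
      ‖Pi‖ ≤ H.toReal ^ (1 / p.toReal) ∧
      (∀ (φ : Lp ℝ p μ) (k : ℤ),
        Pi φ k = (μ (img f k W)).toReal ^ (1 / p.toReal) / (μ W).toReal *
          ∫ x in W, (φ : X → ℝ) ((f ^ k) x) ∂μ) ∧
      (∀ φ : Lp ℝ p μ, Pi (T φ) = Bw (Pi φ)) ∧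
      (∀ x : lp (fun _ : ℤ => ℝ) p, ∃ φ : Lp ℝ p μ, Pi φ = x ∧ ‖φ‖ ≤ 1 * ‖x‖) := by
  obtain ⟨hsig, hfm, hfm', hWm, hWpos, hWfin, hdisj, hcover⟩ := hdiss
  have hp1 : (1 : ℝ≥0∞) ≤ p := Fact.out
  have hp0 : p ≠ 0 := fun h => by simp [h] at hp1
  have hpt1 : 1 ≤ p.toReal := by
    rw [← ENNReal.toReal_one]
    exact ENNReal.toReal_mono hp hp1
  have hpt0 : 0 < p.toReal := zero_lt_one.trans_le hpt1
  have hexp0 : (0 : ℝ) ≤ 1 - 1 / p.toReal := by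
    have : 1 / p.toReal ≤ 1 := by
      rw [div_le_one hpt0]; exact hpt1
    linarith
  have hμk : ∀ k : ℤ, 0 < μ (img f k W) ∧ μ (img f k W) ≠ ⊤ := fun k =>
    img_pos_fin hfm hfm' hstar hstar' hWm hWpos hWfin k
  have hμk0 : ∀ k, μ (img f k W) ≠ 0 := fun k => (hμk k).1.ne'
  have hμkt : ∀ k, μ (img f k W) ≠ ⊤ := fun k => (hμk k).2
  have hμkR : ∀ k, 0 < (μ (img f k W)).toReal := fun k =>
    ENNReal.toReal_pos (hμk0 k) (hμkt k)
  have hWR : 0 < (μ W).toReal := ENNReal.toReal_pos hWpos.ne' hWfin.ne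
  obtain ⟨c, hc0, hct, hc⟩ := id hstar
  obtain ⟨c', hc'0, hc't, hc'⟩ := id hstar'
  have himg_pred : ∀ k : ℤ, ⇑f ⁻¹' (img f k W) = img f (k - 1) W := by
    intro k
    rw [img_eq_preimage, img_eq_preimage, show (-(k - 1) : ℤ) = -k + 1 by ring,
      zpow_add_one, Equiv.Perm.coe_mul, Set.preimage_comp]
  have himg_succ : ∀ k : ℤ, ⇑f.symm ⁻¹' (img f (k - 1) W) = img f k W := by
    intro k
    rw [img_eq_preimage, img_eq_preimage, show (-k : ℤ) = -(k - 1) - 1 by ring,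
      zpow_sub_one, Equiv.Perm.coe_mul, Equiv.Perm.inv_def, Set.preimage_comp]
  have hub : ∀ k : ℤ, μ (img f (k - 1) W) ≤ c * μ (img f k W) := fun k => by
    rw [← himg_pred k]; exact hc _ (measurableSet_img hfm hfm' k hWm)
  have hlb : ∀ k : ℤ, μ (img f k W) ≤ c' * μ (img f (k - 1) W) := fun k => by
    rw [← himg_succ k]; exact hc' _ (measurableSet_img hfm hfm' (k - 1) hWm)
  have ha0 : 0 < ((c'⁻¹ ^ (1 / p.toReal)).toReal : ℝ) := by
    refine ENNReal.toReal_pos ?_ ?_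
    · exact (ENNReal.rpow_pos (ENNReal.inv_pos.2 hc't) (ENNReal.inv_ne_top.2 hc'0.ne')).ne'
    · exact ENNReal.rpow_ne_top_of_nonneg (by positivity) (ENNReal.inv_ne_top.2 hc'0.ne')
  have hw_ub : ∀ k, wseq μ f W p k ≤ (c ^ (1 / p.toReal)).toReal := by
    intro k
    have hr : μ (img f (k - 1) W) / μ (img f k W) ≤ c :=
      (ENNReal.div_le_iff_le_mul (Or.inl (hμk0 k)) (Or.inl (hμkt k))).2 (hub k)
    refine ENNReal.toReal_mono (ENNReal.rpow_ne_top_of_nonneg (by positivity) hct) ?_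
    exact ENNReal.rpow_le_rpow hr (by positivity)
  have hw_lb : ∀ k, ((c'⁻¹ ^ (1 / p.toReal)).toReal : ℝ) ≤ wseq μ f W p k := by
    intro k
    have hr : c'⁻¹ ≤ μ (img f (k - 1) W) / μ (img f k W) := by
      rw [ENNReal.le_div_iff_mul_le (Or.inl (hμk0 k)) (Or.inr (hμkt (k - 1)))]
      calc c'⁻¹ * μ (img f k W) ≤ c'⁻¹ * (c' * μ (img f (k - 1) W)) := by
            gcongr; exact hlb k
        _ = μ (img f (k - 1) W) := by
            rw [← mul_assoc, ENNReal.inv_mul_cancel hc'0.ne' hc't, one_mul]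
    refine ENNReal.toReal_mono ?_ (ENNReal.rpow_le_rpow hr (by positivity))
    exact ENNReal.rpow_ne_top_of_nonneg (by positivity)
      (ENNReal.div_lt_top (hμkt (k - 1)) (hμk0 k)).ne
  set a : ℝ := (c'⁻¹ ^ (1 / p.toReal)).toReal with ha_def
  set b : ℝ := (c ^ (1 / p.toReal)).toReal with hb_def
  have hb0 : (0 : ℝ) ≤ b := ENNReal.toReal_nonneg
  have hwpos : ∀ n, 0 < wseq μ f W p n := fun n => lt_of_lt_of_le ha0 (hw_lb n)
  have hw_abs : ∀ n, |wseq μ f W p n| ≤ b := fun n => by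
    rw [abs_of_pos (hwpos n)]; exact hw_ub n
  have hwinv_abs : ∀ n, |(wseq μ f W p n)⁻¹| ≤ a⁻¹ := fun n => by
    rw [abs_of_pos (inv_pos.2 (hwpos n))]
    exact inv_anti₀ ha0 (hw_lb n)
  -- the weighted shift
  let S₀ : lp (fun _ : ℤ => ℝ) p →ₗ[ℝ] lp (fun _ : ℤ => ℝ) p :=
    { toFun := fun x => ⟨fun n => wseq μ f W p (n + 1) * x (n + 1),
        shift_memℓp hpt0 (fun n => wseq μ f W p (n + 1))
          (fun n => hw_abs (n + 1)) (Equiv.addRight (1 : ℤ)) x⟩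
      map_add' := fun x y => by
        refine lp.ext (funext fun n => ?_)
        simp [mul_add]; rfl
      map_smul' := fun r x => by
        refine lp.ext (funext fun n => ?_)
        simp [mul_comm, mul_left_comm] }
  let Sinv₀ : lp (fun _ : ℤ => ℝ) p →ₗ[ℝ] lp (fun _ : ℤ => ℝ) p :=
    { toFun := fun x => ⟨fun n => (wseq μ f W p n)⁻¹ * x (n - 1),
        shift_memℓp hpt0 (fun n => (wseq μ f W p n)⁻¹)
          (fun n => hwinv_abs n) (Equiv.subRight (1 : ℤ)) x⟩
      map_add' := fun x y => by
        refine lp.ext (funext fun n => ?_)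
        simp [mul_add]; rfl
      map_smul' := fun r x => by
        refine lp.ext (funext fun n => ?_)
        simp [mul_comm, mul_left_comm] }
  let S : lp (fun _ : ℤ => ℝ) p →L[ℝ] lp (fun _ : ℤ => ℝ) p :=
    S₀.mkContinuous b (fun x => lp.norm_le_of_tsum_le hpt0
      (mul_nonneg hb0 (norm_nonneg x))
      (shift_tsum_le hpt0 _ (fun n => hw_abs (n + 1)) (Equiv.addRight (1 : ℤ)) x))
  let Sinv : lp (fun _ : ℤ => ℝ) p →L[ℝ] lp (fun _ : ℤ => ℝ) p :=
    Sinv₀.mkContinuous a⁻¹ (fun x => lp.norm_le_of_tsum_le hpt0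
      (mul_nonneg (inv_nonneg.2 ha0.le) (norm_nonneg x))
      (shift_tsum_le hpt0 _ (fun n => hwinv_abs n) (Equiv.subRight (1 : ℤ)) x))
  have hleft : ∀ x, Sinv (S x) = x := by
    intro x
    refine lp.ext (funext fun n => ?_)
    show (wseq μ f W p n)⁻¹ * (wseq μ f W p (n - 1 + 1) * x (n - 1 + 1)) = x n
    rw [sub_add_cancel]
    exact inv_mul_cancel_left₀ (hwpos n).ne' _
  have hright : ∀ x, S (Sinv x) = x := by
    intro x
    refine lp.ext (funext fun n => ?_)
    show wseq μ f W p (n + 1) * ((wseq μ f W p (n + 1))⁻¹ * x (n + 1 - 1)) = x n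
    rw [add_sub_cancel_right]
    exact mul_inv_cancel_left₀ (hwpos (n + 1)).ne' _
  let Bw : lp (fun _ : ℤ => ℝ) p ≃L[ℝ] lp (fun _ : ℤ => ℝ) p :=
    ContinuousLinearEquiv.equivOfInverse S Sinv hleft hright
  have hBw_apply : ∀ (x : lp (fun _ : ℤ => ℝ) p) (n : ℤ),
      Bw x n = wseq μ f W p (n + 1) * x (n + 1) := fun x n => rfl
  -- the factor map
  have hgbd2 : ∀ B : Set X, MeasurableSet B → B ⊆ W → 0 < μ B → ∀ r s : ℤ,
      μ (img f (r + s) B) / μ (img f s B) ≤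
        H * (μ (img f (r + s) W) / μ (img f s W)) :=
    fun B hB hsub hpos r s => (hgbd B hB hsub hpos r s).2
  have hEfin : ∀ φ : Lp ℝ p μ,
      (∫⁻ y, (‖(φ : X → ℝ) y‖₊ : ℝ≥0∞) ^ p.toReal ∂μ) ≠ ⊤ := by
    intro φ
    have h1 : eLpNorm (φ : X → ℝ) p μ < ⊤ := (Lp.memLp φ).2
    rw [eLpNorm_eq_lintegral_rpow_enorm_toReal hp0 hp] at h1
    intro htop
    erw [htop, ENNReal.top_rpow_of_pos (by positivity)] at h1
    exact (lt_irrefl _ h1).elim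
  have hcomp : ∀ (φ : Lp ℝ p μ) (k : ℤ),
      ∫⁻ x in W, (‖(φ : X → ℝ) ((f ^ k) x)‖₊ : ℝ≥0∞) ^ p.toReal ∂μ ≤
        H * (μ W / μ (img f k W)) *
          ∫⁻ y in img f k W, (‖(φ : X → ℝ) y‖₊ : ℝ≥0∞) ^ p.toReal ∂μ := by
    intro φ k
    obtain ⟨ψ, hψsm, hψae⟩ := (Lp.aestronglyMeasurable φ)
    have hψm : Measurable ψ := hψsm.measurable
    have haeW : (fun x => (‖(φ : X → ℝ) ((f ^ k) x)‖₊ : ℝ≥0∞) ^ p.toReal)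
        =ᵐ[μ.restrict W] fun x => (‖ψ ((f ^ k) x)‖₊ : ℝ≥0∞) ^ p.toReal :=
      ae_restrict_of_ae (ae_nnnorm_rpow (ae_comp hfm hfm' hstar hstar' k hψae) _)
    have haeI : (fun y => (‖(φ : X → ℝ) y‖₊ : ℝ≥0∞) ^ p.toReal)
        =ᵐ[μ.restrict (img f k W)] fun y => (‖ψ y‖₊ : ℝ≥0∞) ^ p.toReal :=
      ae_restrict_of_ae (ae_nnnorm_rpow hψae _)
    rw [lintegral_congr_ae haeW, lintegral_congr_ae haeI]
    exact lint_comp_le hfm hfm' hstar hstar' hWm hWpos hWfin hgbd2 k _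
      (hψm.enorm.pow_const _)
  have hNle : ∀ (φ : Lp ℝ p μ) (k : ℤ),
      (∫⁻ x in W, (‖(φ : X → ℝ) ((f ^ k) x)‖₊ : ℝ≥0∞) ∂μ) ≤
        (H * (μ W / μ (img f k W)) *
            ∫⁻ y in img f k W, (‖(φ : X → ℝ) y‖₊ : ℝ≥0∞) ^ p.toReal ∂μ) ^ (1 / p.toReal)
          * (μ W) ^ (1 - 1 / p.toReal) := by
    intro φ k
    obtain ⟨ψ, hψsm, hψae⟩ := (Lp.aestronglyMeasurable φ)
    have hψm : Measurable ψ := hψsm.measurable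
    have hmeas : AEMeasurable (fun x => (‖(φ : X → ℝ) ((f ^ k) x)‖₊ : ℝ≥0∞))
        (μ.restrict W) := by
      refine ((hψm.comp (meas_zpow hfm hfm' k)).enorm).aemeasurable.congr ?_
      exact ae_restrict_of_ae
        (ae_nnnorm' (ae_comp hfm hfm' hstar hstar' k hψae.symm))
    refine (lint_holder hpt1 _ hmeas).trans ?_
    gcongr
    exact hcomp φ k
  have hLfinK : ∀ (φ : Lp ℝ p μ) (k : ℤ),
      (∫⁻ y in img f k W, (‖(φ : X → ℝ) y‖₊ : ℝ≥0∞) ^ p.toReal ∂μ) ≠ ⊤ :=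
    fun φ k => ne_top_of_le_ne_top (hEfin φ)
      (lintegral_mono' Measure.restrict_le_self le_rfl)
  have hCkfin : ∀ k : ℤ, H * (μ W / μ (img f k W)) ≠ ⊤ := fun k =>
    ENNReal.mul_ne_top hHfin (ENNReal.div_lt_top hWfin.ne (hμk0 k)).ne
  have hIint : ∀ (φ : Lp ℝ p μ) (k : ℤ),
      IntegrableOn (fun x => (φ : X → ℝ) ((f ^ k) x)) W μ := by
    intro φ k
    obtain ⟨ψ, hψsm, hψae⟩ := (Lp.aestronglyMeasurable φ)
    refine ⟨⟨fun x => ψ ((f ^ k) x),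
      hψsm.comp_measurable (meas_zpow hfm hfm' k),
      ae_restrict_of_ae (ae_comp hfm hfm' hstar hstar' k hψae)⟩, ?_⟩
    refine lt_of_le_of_lt (hNle φ k) ?_
    exact ENNReal.mul_lt_top
      (ENNReal.rpow_lt_top_of_nonneg (by positivity)
        (ENNReal.mul_ne_top (hCkfin k) (hLfinK φ k)))
      (ENNReal.rpow_lt_top_of_nonneg hexp0 hWfin.ne)
  have hkR : ∀ (φ : Lp ℝ p μ) (k : ℤ),
      ‖(μ (img f k W)).toReal ^ (1 / p.toReal) / (μ W).toReal *
          ∫ x in W, (φ : X → ℝ) ((f ^ k) x) ∂μ‖ ^ p.toReal ≤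
        H.toReal *
          (∫⁻ y in img f k W, (‖(φ : X → ℝ) y‖₊ : ℝ≥0∞) ^ p.toReal ∂μ).toReal := by
    intro φ k
    set I : ℝ := ∫ x in W, (φ : X → ℝ) ((f ^ k) x) ∂μ with hI_def
    set L : ℝ≥0∞ := ∫⁻ y in img f k W, (‖(φ : X → ℝ) y‖₊ : ℝ≥0∞) ^ p.toReal ∂μ
      with hL_def
    have h1 : (‖I‖₊ : ℝ≥0∞) ≤ ∫⁻ x in W, (‖(φ : X → ℝ) ((f ^ k) x)‖₊ : ℝ≥0∞) ∂μ :=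
      enorm_integral_le_lintegral_enorm _
    have h3 : (‖I‖₊ : ℝ≥0∞) ^ p.toReal ≤
        ((H * (μ W / μ (img f k W)) * L) ^ (1 / p.toReal) *
          (μ W) ^ (1 - 1 / p.toReal)) ^ p.toReal :=
      ENNReal.rpow_le_rpow (h1.trans (hNle φ k)) hpt0.le
    have h4 : ((H * (μ W / μ (img f k W)) * L) ^ (1 / p.toReal) *
        (μ W) ^ (1 - 1 / p.toReal)) ^ p.toReal =
        H * (μ W / μ (img f k W)) * L * (μ W) ^ (p.toReal - 1) := by
      rw [ENNReal.mul_rpow_of_nonneg _ _ hpt0.le, ← ENNReal.rpow_mul,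
        ← ENNReal.rpow_mul, one_div_mul_cancel hpt0.ne', ENNReal.rpow_one,
        show (1 - 1 / p.toReal) * p.toReal = p.toReal - 1 by field_simp]
    rw [h4] at h3
    have hfin : H * (μ W / μ (img f k W)) * L * (μ W) ^ (p.toReal - 1) ≠ ⊤ :=
      ENNReal.mul_ne_top (ENNReal.mul_ne_top (hCkfin k) (hLfinK φ k))
        (ENNReal.rpow_ne_top_of_nonneg (by linarith [hpt1]) hWfin.ne)
    have h5 := ENNReal.toReal_mono hfin h3
    rw [← ENNReal.toReal_rpow, ENNReal.coe_toReal, coe_nnnorm, Real.norm_eq_abs,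
      ENNReal.toReal_mul, ENNReal.toReal_mul, ENNReal.toReal_mul,
      ENNReal.toReal_div, ← ENNReal.toReal_rpow] at h5
    have hWWpt : (μ W).toReal ^ p.toReal =
        (μ W).toReal * (μ W).toReal ^ (p.toReal - 1) := by
      have h := Real.rpow_add hWR 1 (p.toReal - 1)
      rw [Real.rpow_one, show (1 : ℝ) + (p.toReal - 1) = p.toReal by ring] at h
      exact h
    have hck : ((μ (img f k W)).toReal ^ (1 / p.toReal) / (μ W).toReal) ^ p.toReal =
        (μ (img f k W)).toReal / (μ W).toReal ^ p.toReal := by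
      rw [Real.div_rpow (by positivity) hWR.le, ← Real.rpow_mul ENNReal.toReal_nonneg,
        one_div_mul_cancel hpt0.ne', Real.rpow_one]
    have hnorm_eq : ‖(μ (img f k W)).toReal ^ (1 / p.toReal) / (μ W).toReal * I‖ ^ p.toReal
        = ((μ (img f k W)).toReal / (μ W).toReal ^ p.toReal) * |I| ^ p.toReal := by
      rw [norm_mul, Real.norm_eq_abs, Real.norm_eq_abs,
        abs_of_nonneg (by positivity : (0:ℝ) ≤ (μ (img f k W)).toReal ^ (1 / p.toReal) / (μ W).toReal),
        Real.mul_rpow (by positivity) (abs_nonneg _), hck]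
    rw [hnorm_eq]
    calc ((μ (img f k W)).toReal / (μ W).toReal ^ p.toReal) * |I| ^ p.toReal
        ≤ ((μ (img f k W)).toReal / (μ W).toReal ^ p.toReal) *
          (H.toReal * ((μ W).toReal / (μ (img f k W)).toReal) * L.toReal *
            (μ W).toReal ^ (p.toReal - 1)) := by
          gcongr
      _ = H.toReal * L.toReal := by
          rw [hWWpt]
          have h1 : (μ (img f k W)).toReal ≠ 0 := (hμkR k).ne'
          have h2 : (μ W).toReal ≠ 0 := hWR.ne'
          have h3 : (μ W).toReal ^ (p.toReal - 1) ≠ 0 :=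
            (Real.rpow_pos_of_pos hWR _).ne'
          field_simp
  -- summing over k
  have hLsum : ∀ φ : Lp ℝ p μ,
      ∑' k : ℤ, ∫⁻ y in img f k W, (‖(φ : X → ℝ) y‖₊ : ℝ≥0∞) ^ p.toReal ∂μ =
        ∫⁻ y, (‖(φ : X → ℝ) y‖₊ : ℝ≥0∞) ^ p.toReal ∂μ := by
    intro φ
    rw [← lintegral_iUnion (fun k => measurableSet_img hfm hfm' k hWm) hdisj,
      hcover, Measure.restrict_univ]
  have hsummable : ∀ φ : Lp ℝ p μ, Summable (fun k : ℤ => H.toReal *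
      (∫⁻ y in img f k W, (‖(φ : X → ℝ) y‖₊ : ℝ≥0∞) ^ p.toReal ∂μ).toReal) :=
    fun φ => (ENNReal.summable_toReal (by rw [hLsum φ]; exact hEfin φ)).mul_left _
  have hPimem : ∀ φ : Lp ℝ p μ, Memℓp (fun k : ℤ =>
      (μ (img f k W)).toReal ^ (1 / p.toReal) / (μ W).toReal *
        ∫ x in W, (φ : X → ℝ) ((f ^ k) x) ∂μ) p :=
    fun φ => memℓp_gen (Summable.of_nonneg_of_le
      (fun k => by positivity) (fun k => hkR φ k) (hsummable φ))
  have hnormpt : ∀ φ : Lp ℝ p μ,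
      ‖φ‖ ^ p.toReal = (∫⁻ y, (‖(φ : X → ℝ) y‖₊ : ℝ≥0∞) ^ p.toReal ∂μ).toReal := by
    intro φ
    rw [Lp.norm_def, eLpNorm_eq_lintegral_rpow_enorm_toReal hp0 hp, ENNReal.toReal_rpow,
      ← ENNReal.rpow_mul, one_div_mul_cancel hpt0.ne', ENNReal.rpow_one]
    rfl
  have hPitsum : ∀ φ : Lp ℝ p μ,
      ∑' k : ℤ, ‖(μ (img f k W)).toReal ^ (1 / p.toReal) / (μ W).toReal *
          ∫ x in W, (φ : X → ℝ) ((f ^ k) x) ∂μ‖ ^ p.toReal ≤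
        (H.toReal ^ (1 / p.toReal) * ‖φ‖) ^ p.toReal := by
    intro φ
    have h1 := Summable.tsum_le_tsum (fun k => hkR φ k)
      ((hPimem φ).summable hpt0) (hsummable φ)
    rw [tsum_mul_left] at h1
    have h2 : ∑' k : ℤ,
        (∫⁻ y in img f k W, (‖(φ : X → ℝ) y‖₊ : ℝ≥0∞) ^ p.toReal ∂μ).toReal =
        (∫⁻ y, (‖(φ : X → ℝ) y‖₊ : ℝ≥0∞) ^ p.toReal ∂μ).toReal := by
      rw [← ENNReal.tsum_toReal_eq (fun k => hLfinK φ k), hLsum φ]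
    rw [h2] at h1
    refine h1.trans (le_of_eq ?_)
    rw [Real.mul_rpow (by positivity) (norm_nonneg φ),
      ← Real.rpow_mul ENNReal.toReal_nonneg, one_div_mul_cancel hpt0.ne',
      Real.rpow_one, hnormpt φ]
  let Pi₀ : Lp ℝ p μ →ₗ[ℝ] lp (fun _ : ℤ => ℝ) p :=
    { toFun := fun φ => ⟨fun k => (μ (img f k W)).toReal ^ (1 / p.toReal) / (μ W).toReal *
          ∫ x in W, (φ : X → ℝ) ((f ^ k) x) ∂μ, hPimem φ⟩
      map_add' := fun φ ψ => by
        refine lp.ext (funext fun k => ?_)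
        have h1 : (fun x => ((φ + ψ : Lp ℝ p μ) : X → ℝ) ((f ^ k) x))
            =ᵐ[μ.restrict W] fun x =>
              (φ : X → ℝ) ((f ^ k) x) + (ψ : X → ℝ) ((f ^ k) x) := by
          refine ae_restrict_of_ae ?_
          filter_upwards [ae_comp hfm hfm' hstar hstar' k (Lp.coeFn_add φ ψ)] with x hx
          simpa using hx
        show (μ (img f k W)).toReal ^ (1 / p.toReal) / (μ W).toReal *
            ∫ x in W, ((φ + ψ : Lp ℝ p μ) : X → ℝ) ((f ^ k) x) ∂μ = _
        rw [integral_congr_ae h1, integral_add (hIint φ k) (hIint ψ k), mul_add]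
        rfl
      map_smul' := fun r φ => by
        refine lp.ext (funext fun k => ?_)
        have h1 : (fun x => ((r • φ : Lp ℝ p μ) : X → ℝ) ((f ^ k) x))
            =ᵐ[μ.restrict W] fun x => r * (φ : X → ℝ) ((f ^ k) x) := by
          refine ae_restrict_of_ae ?_
          filter_upwards [ae_comp hfm hfm' hstar hstar' k (Lp.coeFn_smul r φ)] with x hx
          simpa using hx
        show (μ (img f k W)).toReal ^ (1 / p.toReal) / (μ W).toReal *
            ∫ x in W, ((r • φ : Lp ℝ p μ) : X → ℝ) ((f ^ k) x) ∂μ = _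
        simp only [integral_congr_ae h1, integral_const_mul]
        show _ = r * ((μ (img f k W)).toReal ^ (1 / p.toReal) / (μ W).toReal *
            ∫ x in W, (φ : X → ℝ) ((f ^ k) x) ∂μ)
        ring }
  let Pw : Lp ℝ p μ →L[ℝ] lp (fun _ : ℤ => ℝ) p :=
    Pi₀.mkContinuous (H.toReal ^ (1 / p.toReal)) (fun φ =>
      lp.norm_le_of_tsum_le hpt0
        (mul_nonneg (Real.rpow_nonneg ENNReal.toReal_nonneg _) (norm_nonneg φ))
        (hPitsum φ))
  have hPw_apply : ∀ (φ : Lp ℝ p μ) (k : ℤ),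
      Pw φ k = (μ (img f k W)).toReal ^ (1 / p.toReal) / (μ W).toReal *
        ∫ x in W, (φ : X → ℝ) ((f ^ k) x) ∂μ := fun φ k => rfl
  have hPw_norm : ‖Pw‖ ≤ H.toReal ^ (1 / p.toReal) :=
    LinearMap.mkContinuous_norm_le _ (Real.rpow_nonneg ENNReal.toReal_nonneg _) _
  -- intertwining
  have hinter : ∀ φ : Lp ℝ p μ, Pw (T φ) = Bw (Pw φ) := by
    intro φ
    refine lp.ext (funext fun k => ?_)
    have hcoe : ∀ x : X, f ((f ^ k) x) = (f ^ (k + 1)) x := by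
      intro x
      rw [show k + 1 = 1 + k from add_comm k 1, zpow_add, zpow_one,
        Equiv.Perm.coe_mul, Function.comp_apply]
    have h1 : (fun x => ((T φ : Lp ℝ p μ) : X → ℝ) ((f ^ k) x))
        =ᵐ[μ.restrict W] fun x => (φ : X → ℝ) ((f ^ (k + 1)) x) := by
      refine ae_restrict_of_ae ?_
      filter_upwards [ae_comp hfm hfm' hstar hstar' k (hT φ)] with x hx
      rw [hx, hcoe x]
    have hBk : Bw (Pw φ) k = wseq μ f W p (k + 1) *
        ((μ (img f (k + 1) W)).toReal ^ (1 / p.toReal) / (μ W).toReal *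
          ∫ x in W, (φ : X → ℝ) ((f ^ (k + 1)) x) ∂μ) := hBw_apply (Pw φ) k
    have hconst : wseq μ f W p (k + 1) *
        ((μ (img f (k + 1) W)).toReal ^ (1 / p.toReal) / (μ W).toReal) =
        (μ (img f k W)).toReal ^ (1 / p.toReal) / (μ W).toReal := by
      have hw : wseq μ f W p (k + 1) =
          (μ (img f k W)).toReal ^ (1 / p.toReal) /
            (μ (img f (k + 1) W)).toReal ^ (1 / p.toReal) := by
        simp only [wseq, show k + 1 - 1 = k from by ring]
        rw [ENNReal.div_rpow_of_nonneg _ _ (by positivity), ENNReal.toReal_div,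
          ← ENNReal.toReal_rpow, ← ENNReal.toReal_rpow]
      rw [hw]
      have hB0 : (μ (img f (k + 1) W)).toReal ^ (1 / p.toReal) ≠ 0 :=
        (Real.rpow_pos_of_pos (hμkR (k + 1)) _).ne'
      field_simp
    calc Pw (T φ) k
        = (μ (img f k W)).toReal ^ (1 / p.toReal) / (μ W).toReal *
          ∫ x in W, ((T φ : Lp ℝ p μ) : X → ℝ) ((f ^ k) x) ∂μ := hPw_apply _ _
      _ = (μ (img f k W)).toReal ^ (1 / p.toReal) / (μ W).toReal *
          ∫ x in W, (φ : X → ℝ) ((f ^ (k + 1)) x) ∂μ := by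
            rw [integral_congr_ae h1]
      _ = Bw (Pw φ) k := by rw [hBk, ← mul_assoc, hconst]
  -- bounded selector
  have hsel : ∀ x : lp (fun _ : ℤ => ℝ) p,
      ∃ φ : Lp ℝ p μ, Pw φ = x ∧ ‖φ‖ ≤ ‖x‖ := by
    intro x
    have hex : ∀ y : X, ∃ k : ℤ, y ∈ img f k W := by
      intro y
      have hy : y ∈ ⋃ k : ℤ, img f k W := by rw [hcover]; trivial
      exact mem_iUnion.1 hy
    set e : X → ℤ := fun y => Classical.choose (hex y) with he_def
    have he_mem : ∀ y, y ∈ img f (e y) W := fun y => Classical.choose_spec (hex y)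
    have he_uniq : ∀ {y : X} {k : ℤ}, y ∈ img f k W → e y = k := by
      intro y k hk
      by_contra hne
      exact Set.disjoint_left.1 (hdisj hne) (he_mem y) hk
    have he_meas : Measurable e := by
      refine measurable_to_countable' fun k => ?_
      have hpre : e ⁻¹' {k} = img f k W := by
        ext y
        constructor
        · intro h
          have h2 := he_mem y
          rwa [show e y = k from h] at h2
        · intro h
          exact he_uniq h
      rw [hpre]
      exact measurableSet_img hfm hfm' k hWm
    set v : ℤ → ℝ := fun k => x k * ((μ (img f k W)).toReal ^ (1 / p.toReal))⁻¹
      with hv_def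
    set g : X → ℝ := fun y => v (e y) with hg_def
    have hg_meas : Measurable g := (measurable_of_countable v).comp he_meas
    have hg_on : ∀ {k : ℤ} {y : X}, y ∈ img f k W → g y = v k := by
      intro k y hk
      simp only [hg_def, he_uniq hk]
    have hApos : ∀ k : ℤ, (0 : ℝ) < (μ (img f k W)).toReal ^ (1 / p.toReal) :=
      fun k => Real.rpow_pos_of_pos (hμkR k) _
    have hterm : ∀ k : ℤ, ∫⁻ y in img f k W, (‖g y‖₊ : ℝ≥0∞) ^ p.toReal ∂μ =
        ENNReal.ofReal (‖x k‖ ^ p.toReal) := by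
      intro k
      have hcongr : ∫⁻ y in img f k W, (‖g y‖₊ : ℝ≥0∞) ^ p.toReal ∂μ =
          ∫⁻ _ in img f k W, (‖v k‖₊ : ℝ≥0∞) ^ p.toReal ∂μ :=
        setLIntegral_congr_fun_ae (measurableSet_img hfm hfm' k hWm)
          (Filter.Eventually.of_forall fun y hy => by
            show (‖g y‖₊ : ℝ≥0∞) ^ p.toReal = (‖v k‖₊ : ℝ≥0∞) ^ p.toReal
            rw [hg_on hy])
      rw [hcongr, setLIntegral_const, ← enorm_eq_nnnorm, ← ofReal_norm,
        ENNReal.ofReal_rpow_of_nonneg (norm_nonneg _) hpt0.le]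
      have hv_norm : ‖v k‖ ^ p.toReal =
          ‖x k‖ ^ p.toReal * ((μ (img f k W)).toReal)⁻¹ := by
        simp only [hv_def]
        rw [norm_mul, Real.norm_eq_abs (((μ (img f k W)).toReal ^ (1 / p.toReal))⁻¹),
          abs_of_pos (inv_pos.2 (hApos k)),
          Real.mul_rpow (norm_nonneg _) (inv_pos.2 (hApos k)).le,
          Real.inv_rpow (hApos k).le, ← Real.rpow_mul ENNReal.toReal_nonneg,
          one_div_mul_cancel hpt0.ne', Real.rpow_one]
      rw [hv_norm, ENNReal.ofReal_mul (by positivity),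
        ENNReal.ofReal_inv_of_pos (hμkR k), ENNReal.ofReal_toReal (hμkt k),
        mul_assoc, ENNReal.inv_mul_cancel (hμk0 k) (hμkt k), mul_one]
    have hEg : ∫⁻ y, (‖g y‖₊ : ℝ≥0∞) ^ p.toReal ∂μ =
        ENNReal.ofReal (‖x‖ ^ p.toReal) := by
      rw [← setLIntegral_univ, ← hcover,
        lintegral_iUnion (fun k => measurableSet_img hfm hfm' k hWm) hdisj]
      rw [tsum_congr hterm, ← ENNReal.ofReal_tsum_of_nonneg
        (fun k => by positivity) ((lp.memℓp x).summable hpt0),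
        ← lp.norm_rpow_eq_tsum hpt0 x]
    have hgmem : MemLp g p μ := by
      refine ⟨hg_meas.aestronglyMeasurable, ?_⟩
      erw [eLpNorm_eq_lintegral_rpow_enorm_toReal hp0 hp, hEg]
      exact ENNReal.rpow_lt_top_of_nonneg (by positivity) ENNReal.ofReal_ne_top
    refine ⟨hgmem.toLp g, ?_, ?_⟩
    · refine lp.ext (funext fun k => ?_)
      have h1 : (fun y => ((hgmem.toLp g : Lp ℝ p μ) : X → ℝ) ((f ^ k) y))
          =ᵐ[μ.restrict W] fun y => g ((f ^ k) y) :=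
        ae_restrict_of_ae (ae_comp hfm hfm' hstar hstar' k (MemLp.coeFn_toLp hgmem))
      have h2 : ∫ y in W, g ((f ^ k) y) ∂μ = (μ W).toReal * v k := by
        rw [setIntegral_congr_fun hWm
          (fun y hy => hg_on (Set.mem_image_of_mem _ hy) :
            EqOn (fun y => g ((f ^ k) y)) (fun _ => v k) W),
          setIntegral_const, smul_eq_mul]
        rfl
      calc Pw (hgmem.toLp g) k
          = (μ (img f k W)).toReal ^ (1 / p.toReal) / (μ W).toReal *
            ∫ y in W, ((hgmem.toLp g : Lp ℝ p μ) : X → ℝ) ((f ^ k) y) ∂μ :=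
            hPw_apply _ _
        _ = (μ (img f k W)).toReal ^ (1 / p.toReal) / (μ W).toReal *
            ((μ W).toReal * v k) := by rw [integral_congr_ae h1, h2]
        _ = x k := by
            simp only [hv_def]
            have hA := (hApos k).ne'
            have hW0 := hWR.ne'
            field_simp
    · refine le_of_eq ?_
      erw [Lp.norm_toLp, eLpNorm_eq_lintegral_rpow_enorm_toReal hp0 hp, hEg,
        ENNReal.ofReal_rpow_of_nonneg (by positivity) (by positivity),
        ENNReal.toReal_ofReal (by positivity), ← Real.rpow_mul (norm_nonneg x),
        mul_one_div_cancel hpt0.ne', Real.rpow_one]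
  exact ⟨⟨a, b, ha0, fun k => ⟨hw_lb k, hw_ub k⟩⟩, Bw, Pw, hBw_apply,
    fun x => (hsel x).imp fun φ h => h.1, hPw_norm, hPw_apply, hinter,
    fun x => (hsel x).imp fun φ h => ⟨h.1, by rw [one_mul]; exact h.2⟩⟩





end GHShadow
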